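/- Let X and Y be finite types, let Q be a probability distribution on X × Y with Q(x,y) > 0 for all (x,y), and let ρ_Q(x) = ∑ y, Q(x,y) denote its X-marginal. Let ρ_D be a probability distribution on X, and define P*(x,y) = Q(x,y) · ρ_D(x) / ρ_Q(x). Then P* is a probability distribution on X × Y with X-marginal ρ_D, and for every probability distribution P on X × Y with ∑ y, P(x,y) = ρ_D(x) for all x, the relative entropy satisfies S[P,Q] = −∑ (x,y), P(x,y) * log (P(x,y) / Q(x,y)) ≤ S[P*,Q] = −∑ x, ρ_D(x) * log (ρ_D(x) / ρ_Q(x)), with equality if and only if P = P*. -/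

import Mathlib

open Finset

/-- Gibbs' inequality (finite form), with equality case. -/
lemma gibbs_aux {ι : Type*} [Fintype ι] (p q : ι → ℝ) (hp : ∀ i, 0 ≤ p i)
    (hq : ∀ i, 0 ≤ q i) (hpq : ∀ i, 0 < p i → 0 < q i)
    (hsum : ∑ i, p i = ∑ i, q i) :
    0 ≤ ∑ i, p i * Real.log (p i / q i) ∧
      ((∑ i, p i * Real.log (p i / q i)) = 0 ↔ p = q) := by
  have key : ∀ i, p i - q i ≤ p i * Real.log (p i / q i) := by
    intro i
    rcases (hp i).lt_or_eq with hpi | hpi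
    · have hqi := hpq i hpi
      have h1 : Real.log (q i / p i) ≤ q i / p i - 1 :=
        Real.log_le_sub_one_of_pos (div_pos hqi hpi)
      have h2' : Real.log (p i / q i) = -Real.log (q i / p i) := by
        rw [← Real.log_inv, inv_div]
      have h2 : p i * Real.log (p i / q i) = -(p i * Real.log (q i / p i)) := by
        rw [h2']; ring
      have h3 : p i * Real.log (q i / p i) ≤ p i * (q i / p i - 1) :=
        mul_le_mul_of_nonneg_left h1 hpi.le
      have h4 : p i * (q i / p i - 1) = q i - p i := by
        field_simp
      linarith
    · simp [← hpi]
      linarith [hq i]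
  have keyeq : ∀ i, p i - q i = p i * Real.log (p i / q i) ↔ p i = q i := by
    intro i
    constructor
    · intro h
      rcases (hp i).lt_or_eq with hpi | hpi
      · by_contra hne
        have hqi := hpq i hpi
        have hne' : q i / p i ≠ 1 := by
          intro h1
          exact hne ((div_eq_one_iff_eq hpi.ne').mp h1).symm
        have h1 : Real.log (q i / p i) < q i / p i - 1 :=
          Real.log_lt_sub_one_of_pos (div_pos hqi hpi) hne'
        have h2' : Real.log (p i / q i) = -Real.log (q i / p i) := by
          rw [← Real.log_inv, inv_div]
        have h2 : p i * Real.log (p i / q i) = -(p i * Real.log (q i / p i)) := by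
          rw [h2']; ring
        have h3 : p i * Real.log (q i / p i) < p i * (q i / p i - 1) :=
          (mul_lt_mul_iff_right₀ hpi).mpr h1
        have h4 : p i * (q i / p i - 1) = q i - p i := by field_simp
        linarith
      · simp [← hpi] at h ⊢
        linarith
    · intro h
      rcases (hq i).lt_or_eq with hqi | hqi
      · rw [h, div_self hqi.ne', Real.log_one, mul_zero, sub_self]
      · rw [h, ← hqi]; simp
  have hsumsub : ∑ i, (p i - q i) = 0 := by
    rw [Finset.sum_sub_distrib, hsum, sub_self]
  constructor
  · calc (0:ℝ) = ∑ i, (p i - q i) := hsumsub.symm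
      _ ≤ ∑ i, p i * Real.log (p i / q i) :=
        Finset.sum_le_sum fun i _ => key i
  · rw [← hsumsub]
    rw [eq_comm, Finset.sum_eq_sum_iff_of_le fun i _ => key i]
    constructor
    · intro h
      funext i
      exact (keyeq i).mp (h i (Finset.mem_univ i))
    · intro h i _
      exact (keyeq i).mpr (congrFun h i)

/-- Maximum entropy updating of a joint distribution when the new information is
the `X`-marginal `ρD`: the posterior `P*(x,y) = Q(x,y)·ρD(x)/ρ_Q(x)` is a probability
distribution with `X`-marginal `ρD`, it maximizes the relative entropy `S[P,Q]` among
all such posteriors `P` (with equality iff `P = P*`), and the maximal value is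
`−∑ x, ρD(x) log(ρD(x)/ρ_Q(x))`. -/
theorem marginal_constraint_max_entropy_update {X Y : Type*} [Fintype X] [Fintype Y]
    (Q : X × Y → ℝ) (hQ0 : ∀ z, 0 < Q z) (hQ1 : ∑ z, Q z = 1)
    (ρQ : X → ℝ) (hρQ : ∀ x, ρQ x = ∑ y, Q (x, y))
    (ρD : X → ℝ) (hρD0 : ∀ x, 0 ≤ ρD x) (hρD1 : ∑ x, ρD x = 1)
    (Pstar : X × Y → ℝ) (hPstar : ∀ x y, Pstar (x, y) = Q (x, y) * ρD x / ρQ x) :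
    (∀ z, 0 ≤ Pstar z) ∧ (∑ z, Pstar z = 1) ∧ (∀ x, ∑ y, Pstar (x, y) = ρD x) ∧
      ∀ P : X × Y → ℝ, (∀ z, 0 ≤ P z) → (∑ z, P z = 1) →
        (∀ x, ∑ y, P (x, y) = ρD x) →
        (-∑ z, P z * Real.log (P z / Q z) ≤ -∑ z, Pstar z * Real.log (Pstar z / Q z)) ∧
        (-∑ z, Pstar z * Real.log (Pstar z / Q z)
            = -∑ x, ρD x * Real.log (ρD x / ρQ x)) ∧
        (-∑ z, P z * Real.log (P z / Q z) = -∑ z, Pstar z * Real.log (Pstar z / Q z)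
            ↔ P = Pstar) := by
  have hY : Nonempty Y := by
    by_contra h
    rw [not_nonempty_iff] at h
    rw [Fintype.sum_prod_type] at hQ1
    simp at hQ1
  have hρQpos : ∀ x, 0 < ρQ x := by
    intro x
    rw [hρQ x]
    exact Finset.sum_pos (fun y _ => hQ0 (x, y)) Finset.univ_nonempty
  have hPs0 : ∀ z, 0 ≤ Pstar z := by
    intro ⟨x, y⟩
    have h1 := (hQ0 (x, y)).le
    have h2 := hρD0 x
    have h3 := (hρQpos x).le
    rw [hPstar x y]
    positivity
  have hPsmarg : ∀ x, ∑ y, Pstar (x, y) = ρD x := by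
    intro x
    calc ∑ y, Pstar (x, y) = ∑ y, Q (x, y) * (ρD x / ρQ x) := by
          simp only [hPstar, mul_div_assoc]
      _ = (∑ y, Q (x, y)) * (ρD x / ρQ x) := (Finset.sum_mul ..).symm
      _ = ρD x := by
          rw [← hρQ, mul_comm, div_mul_cancel₀ _ (hρQpos x).ne']
  have hPs1 : ∑ z, Pstar z = 1 := by
    rw [Fintype.sum_prod_type]
    simp only [hPsmarg]
    exact hρD1
  refine ⟨hPs0, hPs1, hPsmarg, ?_⟩
  -- key decomposition, valid for any nonnegative function with marginal ρD
  have key : ∀ P : X × Y → ℝ, (∀ z, 0 ≤ P z) → (∀ x, ∑ y, P (x, y) = ρD x) →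
      ∑ z, P z * Real.log (P z / Q z)
        = (∑ z, P z * Real.log (P z / Pstar z))
          + ∑ x, ρD x * Real.log (ρD x / ρQ x) := by
    intro P hP0 hPm
    have hdec : ∀ z : X × Y, P z * Real.log (P z / Q z)
        = P z * Real.log (P z / Pstar z) + P z * Real.log (ρD z.1 / ρQ z.1) := by
      intro ⟨x, y⟩
      rcases (hP0 (x, y)).lt_or_eq with hPz | hPz
      · have hρDx : 0 < ρD x := by
          have hle : P (x, y) ≤ ∑ y', P (x, y') :=
            Finset.single_le_sum (fun y' _ => hP0 (x, y')) (Finset.mem_univ y)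
          rw [hPm x] at hle
          linarith
        have hPsz : 0 < Pstar (x, y) := by
          have := hQ0 (x, y)
          have := hρQpos x
          rw [hPstar x y]
          positivity
        have hQz := (hQ0 (x, y)).ne'
        have hρQx := (hρQpos x).ne'
        have hratio : P (x, y) / Q (x, y)
            = (P (x, y) / Pstar (x, y)) * (ρD x / ρQ x) := by
          rw [hPstar x y]
          field_simp
        rw [hratio, Real.log_mul (div_ne_zero hPz.ne' hPsz.ne')
          (div_ne_zero hρDx.ne' hρQx)]
        ring
      · simp [← hPz]
    calc ∑ z, P z * Real.log (P z / Q z)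
        = ∑ z : X × Y, (P z * Real.log (P z / Pstar z)
            + P z * Real.log (ρD z.1 / ρQ z.1)) := by
          exact Finset.sum_congr rfl fun z _ => hdec z
      _ = (∑ z, P z * Real.log (P z / Pstar z))
            + ∑ z : X × Y, P z * Real.log (ρD z.1 / ρQ z.1) := Finset.sum_add_distrib
      _ = (∑ z, P z * Real.log (P z / Pstar z))
            + ∑ x, ρD x * Real.log (ρD x / ρQ x) := by
          congr 1
          rw [Fintype.sum_prod_type]
          refine Finset.sum_congr rfl fun x _ => ?_
          show ∑ y, P (x, y) * Real.log (ρD x / ρQ x) = _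
          rw [← Finset.sum_mul, hPm x]
  have hstarKL : ∑ z, Pstar z * Real.log (Pstar z / Pstar z) = 0 := by
    refine Finset.sum_eq_zero fun z _ => ?_
    rcases (hPs0 z).lt_or_eq with h | h
    · rw [div_self h.ne', Real.log_one, mul_zero]
    · rw [← h]; ring
  have hstar : ∑ z, Pstar z * Real.log (Pstar z / Q z)
      = ∑ x, ρD x * Real.log (ρD x / ρQ x) := by
    rw [key Pstar hPs0 hPsmarg, hstarKL, zero_add]
  intro P hP0 hP1 hPm
  have hpq : ∀ z, 0 < P z → 0 < Pstar z := by
    intro ⟨x, y⟩ hPz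
    have hρDx : 0 < ρD x := by
      have hle : P (x, y) ≤ ∑ y', P (x, y') :=
        Finset.single_le_sum (fun y' _ => hP0 (x, y')) (Finset.mem_univ y)
      rw [hPm x] at hle
      linarith
    have := hQ0 (x, y)
    have := hρQpos x
    rw [hPstar x y]
    positivity
  obtain ⟨hKL0, hKLeq⟩ := gibbs_aux P Pstar hP0 hPs0 hpq (hP1.trans hPs1.symm)
  have hPdec := key P hP0 hPm
  refine ⟨?_, ?_, ?_⟩
  · rw [hPdec, hstar]; linarith
  · rw [hstar]
  · rw [hPdec, hstar]
    constructor
    · intro h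
      apply hKLeq.mp
      linarith
    · intro h
      rw [hKLeq.mpr h]
      ring
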